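/- With y := ⟨x,0,0⟩ and z := ⟨p(x),0,0⟩ for a pullable Dyck word x = 110u0v, the 6-cycle G(x) = (y, f(y), f⁶(y), f⁵(y), z, f(z)) satisfies: (y, f(y)) and (f⁶(y), f⁵(y)) are edges of the f-orbit cycle through y, and (z, f(z)) is an edge of the f-orbit cycle through z; explicitly f(y) = 110u1v0, f⁵(y) = 101u1v0, f⁶(y) = 100u1v0, f(z) = 111u0v0. -/

import Mathlib

/-- Every prefix has at least as many 1s (`true`) as 0s (`false`). -/
def IsDyckPrefix (x : List Bool) : Prop :=
  ∀ p : List Bool, p <+: x → p.count false ≤ p.count true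

/-- A (balanced) Dyck word. -/
def IsDyckWord (x : List Bool) : Prop :=
  x.count true = x.count false ∧ IsDyckPrefix x

/-- A Dyck word of length `2*n` (so with `n` ones). -/
def DyckN (n : ℕ) (x : List Bool) : Prop :=
  x.length = 2 * n ∧ x.count true = n ∧ IsDyckPrefix x

/-- Cyclic right rotation by `s` steps. -/
def rotR (s : ℕ) (x : List Bool) : List Bool :=
  x.rotate (x.length - s % x.length)

lemma prefix_append_cases {p a b : List Bool} (h : p <+: a ++ b) :
    p <+: a ∨ ∃ q, q <+: b ∧ p = a ++ q := by
  obtain ⟨t, ht⟩ := h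
  rcases List.append_eq_append_iff.mp ht with ⟨a', ha', -⟩ | ⟨c', hc', hb⟩
  · exact Or.inl ⟨a', ha'.symm⟩
  · exact Or.inr ⟨c', ⟨t, hb.symm⟩, hc'⟩

lemma dw_nil : IsDyckWord ([] : List Bool) := by
  refine ⟨rfl, fun p hp => ?_⟩
  simp [List.prefix_nil.mp hp]

lemma dw_append {a b : List Bool} (ha : IsDyckWord a) (hb : IsDyckWord b) :
    IsDyckWord (a ++ b) := by
  obtain ⟨ha1, ha2⟩ := ha
  obtain ⟨hb1, hb2⟩ := hb
  constructor
  · simp [List.count_append, ha1, hb1]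
  · intro p hp
    rcases prefix_append_cases hp with h | ⟨q, hq, rfl⟩
    · exact ha2 p h
    · have h1 := hb2 q hq
      simp only [List.count_append]
      omega

lemma dw_wrap {v : List Bool} (hv : IsDyckWord v) :
    IsDyckWord ([true] ++ v ++ [false]) := by
  obtain ⟨h1, h2⟩ := hv
  constructor
  · simp [List.count_append, h1]
  · intro p hp
    rcases prefix_append_cases (a := [true]) (b := v ++ [false]) (by simpa using hp)
      with h | ⟨q, hq, rfl⟩
    · obtain ⟨t, ht⟩ := h
      cases p with
      | nil => simp
      | cons hd tl =>
        simp only [List.cons_append, List.cons.injEq] at ht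
        obtain ⟨rfl, ht2⟩ := ht
        have : tl = [] := by
          have := List.append_eq_nil_iff.mp ht2
          exact this.1
        subst this; simp
    · rcases prefix_append_cases hq with h' | ⟨q', hq', rfl⟩
      · have h3 := h2 q h'
        simp only [List.count_append]
        simp [List.count_cons]
        omega
      · have h3 : q'.length ≤ 1 := by simpa using hq'.length_le
        have h4 : q'.count false ≤ q'.length := List.count_le_length
        simp only [List.count_append]
        simp [List.count_cons]
        omega

lemma count_tf (l : List Bool) : l.count true + l.count false = l.length := by
  induction l with
  | nil => simp
  | cons a l ih => cases a <;> simp [List.count_cons] <;> omega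

lemma dyckN_of {n : ℕ} {w : List Bool} (h : IsDyckWord w) (hl : w.length = 2 * n) :
    DyckN n w := by
  refine ⟨hl, ?_, h.2⟩
  have h1 := count_tf w
  have h2 := h.1
  omega

lemma rotR_zero (w : List Bool) : rotR 0 w = w := by
  unfold rotR
  simp [List.rotate_length]

lemma rotR_eq (a b : List Bool) (ha : a ≠ []) : rotR b.length (a ++ b) = b ++ a := by
  unfold rotR
  have ha' : 0 < a.length := List.length_pos_iff.mpr ha
  rw [List.length_append]
  have hmod : b.length % (a.length + b.length) = b.length := Nat.mod_eq_of_lt (by omega)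
  rw [hmod]
  have h2 : a.length + b.length - b.length = a.length := by omega
  rw [h2, List.rotate_eq_drop_append_take (by simp), List.drop_left, List.take_left]

/-- for a pullable Dyck word `x = 110u0v` with `y := ⟨x,0,0⟩ = x0`
and `z := ⟨p(x),0,0⟩ = p(x)0`, the successor map `F` of the cycle factor (given in
triple notation by `f ⟨x,0,s⟩ = ⟨r x,1,s+1⟩`, `f ⟨x,1,s⟩ = ⟨x,0,s⟩`) satisfies
`f(y) = 110u1v0`, `f⁵(y) = 101u1v0`, `f⁶(y) = 100u1v0` and `f(z) = 111u0v0`;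
hence `(y, f(y))` and `(f⁶(y), f⁵(y))` are edges of the `f`-orbit cycle through `y`,
and `(z, f(z))` is an edge of the `f`-orbit cycle through `z`. -/
theorem gluing_cycle_shares_edges (n : ℕ) (r F : List Bool → List Bool)
    (hr : ∀ u v : List Bool, IsDyckWord u → IsDyckWord v →
      r ([true] ++ u ++ [false] ++ v) = u ++ [true] ++ v ++ [false])
    (hF0 : ∀ x s, DyckN n x → s ≤ 2 * n →
      F (rotR s (x ++ [false])) = rotR (s + 1) (r x ++ [true]))
    (hF1 : ∀ x s, DyckN n x → s ≤ 2 * n →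
      F (rotR s (x ++ [true])) = rotR s (x ++ [false]))
    (u v : List Bool) (hu : IsDyckWord u) (hv : IsDyckWord v)
    (hx : DyckN n ([true, true, false] ++ u ++ [false] ++ v)) :
    let y := [true, true, false] ++ u ++ [false] ++ v ++ [false]
    let z := [true, false, true] ++ u ++ [false] ++ v ++ [false]
    F y = [true, true, false] ++ u ++ [true] ++ v ++ [false] ∧
      F^[5] y = [true, false, true] ++ u ++ [true] ++ v ++ [false] ∧
      F^[6] y = [true, false, false] ++ u ++ [true] ++ v ++ [false] ∧
      F z = [true, true, true] ++ u ++ [false] ++ v ++ [false] := by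
  intro y z
  have hlen := hx.1
  simp at hlen
  -- Dyck word building blocks
  have dnil : IsDyckWord ([] : List Bool) := dw_nil
  have d10 : IsDyckWord [true, false] := by simpa using dw_wrap dnil
  have d10u : IsDyckWord ([true, false] ++ u) := dw_append d10 hu
  have dwv : IsDyckWord ([true] ++ v ++ [false]) := dw_wrap hv
  have dwu : IsDyckWord ([true] ++ u ++ [false]) := dw_wrap hu
  have du1v0 : IsDyckWord (u ++ [true] ++ v ++ [false]) := by
    simpa using dw_append hu dwv
  have d1u0v : IsDyckWord ([true] ++ u ++ [false] ++ v) := by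
    simpa using dw_append dwu hv
  -- DyckN facts
  have dx1 : DyckN n ([true, false] ++ u ++ [true] ++ v ++ [false]) :=
    dyckN_of (by simpa using dw_append d10u dwv) (by simp; omega)
  have dx2 : DyckN n ([true] ++ u ++ [true] ++ v ++ [false] ++ [false]) :=
    dyckN_of (by simpa using dw_wrap du1v0) (by simp; omega)
  have dx3 : DyckN n (u ++ [true] ++ v ++ [false, true, false]) :=
    dyckN_of (by simpa using dw_append du1v0 d10) (by simp; omega)
  have dxz : DyckN n ([true, false, true] ++ u ++ [false] ++ v) :=
    dyckN_of (by simpa using dw_append d10 d1u0v) (by simp; omega)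
  -- rewriting facts for r
  have hrx : r ([true, true, false] ++ u ++ [false] ++ v)
      = [true, false] ++ u ++ [true] ++ v ++ [false] := by
    simpa using hr ([true, false] ++ u) v d10u hv
  have hrx1 : r ([true, false] ++ u ++ [true] ++ v ++ [false])
      = [true] ++ u ++ [true] ++ v ++ [false] ++ [false] := by
    simpa using hr [] (u ++ [true] ++ v ++ [false]) dnil du1v0
  have hrx2 : r ([true] ++ u ++ [true] ++ v ++ [false] ++ [false])
      = u ++ [true] ++ v ++ [false, true, false] := by
    simpa using hr (u ++ [true] ++ v ++ [false]) [] du1v0 dnil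
  have hrxz : r ([true, false, true] ++ u ++ [false] ++ v)
      = [true, true] ++ u ++ [false] ++ v ++ [false] := by
    simpa using hr [] ([true] ++ u ++ [false] ++ v) dnil d1u0v
  -- the chain of F-steps
  have A1 : F ([true, true, false] ++ u ++ [false] ++ v ++ [false])
      = rotR 1 (([true, false] ++ u ++ [true] ++ v ++ [false]) ++ [true]) := by
    have h := hF0 ([true, true, false] ++ u ++ [false] ++ v) 0 hx (by omega)
    rw [rotR_zero, hrx] at h
    simpa using h
  have A2 := hF1 ([true, false] ++ u ++ [true] ++ v ++ [false]) 1 dx1 (by omega)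
  have A3 : F (rotR 1 (([true, false] ++ u ++ [true] ++ v ++ [false]) ++ [false]))
      = rotR 2 (([true] ++ u ++ [true] ++ v ++ [false] ++ [false]) ++ [true]) := by
    have h := hF0 ([true, false] ++ u ++ [true] ++ v ++ [false]) 1 dx1 (by omega)
    rw [hrx1] at h
    simpa using h
  have A4 := hF1 ([true] ++ u ++ [true] ++ v ++ [false] ++ [false]) 2 dx2 (by omega)
  have A5 : F (rotR 2 (([true] ++ u ++ [true] ++ v ++ [false] ++ [false]) ++ [false]))
      = rotR 3 ((u ++ [true] ++ v ++ [false, true, false]) ++ [true]) := by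
    have h := hF0 ([true] ++ u ++ [true] ++ v ++ [false] ++ [false]) 2 dx2 (by omega)
    rw [hrx2] at h
    simpa using h
  have A6 := hF1 (u ++ [true] ++ v ++ [false, true, false]) 3 dx3 (by omega)
  -- final rotation evaluations
  have unonnil : (u ++ [true] ++ v ++ [false]) ≠ [] := by simp
  have fin1 : rotR 1 (([true, false] ++ u ++ [true] ++ v ++ [false]) ++ [true])
      = [true, true, false] ++ u ++ [true] ++ v ++ [false] := by
    have h := rotR_eq ([true, false] ++ u ++ [true] ++ v ++ [false]) [true] (by simp)
    simpa using h
  have fin5 : rotR 3 ((u ++ [true] ++ v ++ [false, true, false]) ++ [true])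
      = [true, false, true] ++ u ++ [true] ++ v ++ [false] := by
    have h := rotR_eq (u ++ [true] ++ v ++ [false]) [true, false, true] unonnil
    simpa using h
  have fin6 : rotR 3 ((u ++ [true] ++ v ++ [false, true, false]) ++ [false])
      = [true, false, false] ++ u ++ [true] ++ v ++ [false] := by
    have h := rotR_eq (u ++ [true] ++ v ++ [false]) [true, false, false] unonnil
    simpa using h
  have B1 : F ([true, false, true] ++ u ++ [false] ++ v ++ [false])
      = rotR 1 (([true, true] ++ u ++ [false] ++ v ++ [false]) ++ [true]) := by
    have h := hF0 ([true, false, true] ++ u ++ [false] ++ v) 0 dxz (by omega)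
    rw [rotR_zero, hrxz] at h
    simpa using h
  have finz : rotR 1 (([true, true] ++ u ++ [false] ++ v ++ [false]) ++ [true])
      = [true, true, true] ++ u ++ [false] ++ v ++ [false] := by
    have h := rotR_eq ([true, true] ++ u ++ [false] ++ v ++ [false]) [true] (by simp)
    simpa using h
  refine ⟨?_, ?_, ?_, ?_⟩
  · show F ([true, true, false] ++ u ++ [false] ++ v ++ [false]) = _
    rw [A1, fin1]
  · show F (F (F (F (F ([true, true, false] ++ u ++ [false] ++ v ++ [false]))))) = _
    rw [A1, A2, A3, A4, A5, fin5]
  · show F (F (F (F (F (F ([true, true, false] ++ u ++ [false] ++ v ++ [false])))))) = _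
    rw [A1, A2, A3, A4, A5, A6, fin6]
  · show F ([true, false, true] ++ u ++ [false] ++ v ++ [false]) = _
    rw [B1, finz]
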